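/- With b_n = 2^n·(6n+1)!!/(2n)! and B_n(x) = (1/6)·Σ_{j=1}^{n} 108^j·b_{n−j}·(x+n)_{[j−1]}, the following identity of rational functions holds for all n ≥ 1: B_n(x) + b_n/(6x+1) = −3·(B_{n−1}(x+1) + b_{n−1}/(6x+7))·(6x+5)(6x+7)/x + (2^n·(x+n)/(6x+1))·((6n−1)!!/((2n)!·x)) + 216·(x+n)·(B_{n−1}(x) + b_{n−1}/(6x+1)). -/

import Mathlib

open Polynomial

/-- The odd double factorial: `oddFac k = (2k+1)!! = 1·3·5···(2k+1)`. -/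
def oddFac (k : ℕ) : ℕ := ∏ i ∈ Finset.range (k+1), (2*i+1)

/-- `bSeq n = 2^n·(6n+1)!!/(2n)!` as a rational number. -/
def bSeq (n : ℕ) : ℚ := 2^n * oddFac (3*n) / (2*n).factorial

/-- The falling factorial `(p)_{[j]} = p(p-1)···(p-j+1)` of a polynomial `p`, with
`(p)_{[0]} = 1`. -/
noncomputable def ff (p : Polynomial ℚ) (j : ℕ) : Polynomial ℚ :=
  ∏ i ∈ Finset.range j, (p - Polynomial.C (i : ℚ))

/-- The polynomial `B_n(x) = (1/6)·Σ_{j=1}^{n} 108^j·b_{n−j}·(x+n)_{[j−1]}`. -/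
noncomputable def Bpoly (n : ℕ) : Polynomial ℚ :=
  Polynomial.C (1/6 : ℚ) *
    ∑ j ∈ Finset.Icc 1 n,
      Polynomial.C ((108:ℚ)^j * bSeq (n-j)) * ff (Polynomial.X + Polynomial.C (n:ℚ)) (j-1)

noncomputable section

/-- The image of `B_n` in the field of rational functions `ℚ(x)`. -/
def Bf (n : ℕ) : RatFunc ℚ := algebraMap (Polynomial ℚ) (RatFunc ℚ) (Bpoly n)

/-- The image of `B_n(x+1)` in `ℚ(x)`. -/
def BfShiftUp (n : ℕ) : RatFunc ℚ :=
  algebraMap (Polynomial ℚ) (RatFunc ℚ) ((Bpoly n).comp (Polynomial.X + 1))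

/-- The image of `B_n(x-1)` in `ℚ(x)`. -/
def BfShiftDown (n : ℕ) : RatFunc ℚ :=
  algebraMap (Polynomial ℚ) (RatFunc ℚ) ((Bpoly n).comp (Polynomial.X - 1))

/-- The generator `x` of `ℚ(x)`. -/
def Xr : RatFunc ℚ := RatFunc.X

/-- Constant rational functions. -/
def cst (a : ℚ) : RatFunc ℚ := RatFunc.C a

end

lemma oddFac_succ (m : ℕ) : oddFac (m+1) = oddFac m * (2*m+3) := by
  unfold oddFac
  rw [Finset.prod_range_succ]
  ring

lemma bSeq_zero : bSeq 0 = 1 := by norm_num [bSeq, oddFac]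

lemma ff_zero (p : Polynomial ℚ) : ff p 0 = 1 := by simp [ff]

lemma ff_succ' (p : Polynomial ℚ) (j : ℕ) : ff p (j+1) = p * ff (p - 1) j := by
  unfold ff
  rw [Finset.prod_range_succ']
  simp only [Nat.cast_zero, Polynomial.C_0, sub_zero]
  rw [mul_comm]
  congr 1
  refine Finset.prod_congr rfl fun i _ => ?_
  simp only [Nat.cast_succ, Polynomial.C_add, Polynomial.C_1]
  ring

lemma sum_Icc_one (n : ℕ) (f : ℕ → Polynomial ℚ) :
    ∑ j ∈ Finset.Icc 1 n, f j = ∑ i ∈ Finset.range n, f (1+i) := by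
  rw [← Finset.Ico_add_one_right_eq_Icc, Finset.sum_Ico_eq_sum_range]
  simp

lemma Bpoly_zero : Bpoly 0 = 0 := by simp [Bpoly]

lemma Bpoly_succ (n : ℕ) :
    Bpoly (n+1) = C (18 * bSeq n) + C 108 * (X + C ((n:ℚ)+1)) * Bpoly n := by
  unfold Bpoly
  rw [sum_Icc_one, sum_Icc_one]
  rw [Finset.sum_range_succ']
  push_cast
  have key : ∀ i ∈ Finset.range n,
      C ((108:ℚ)^(1+(i+1)) * bSeq (n+1-(1+(i+1)))) * ff (X + C ((n:ℚ)+1)) (1+(i+1)-1)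
      = C 108 * (X + C ((n:ℚ)+1)) *
        (C ((108:ℚ)^(1+i) * bSeq (n-(1+i))) * ff (X + C (n:ℚ)) (1+i-1)) := by
    intro i hi
    have e1 : 1+(i+1)-1 = (1+i-1)+1 := by omega
    have e3 : n+1-(1+(i+1)) = n-(1+i) := by omega
    rw [e1, e3, ff_succ']
    have e4 : (X + C ((n:ℚ)+1)) - 1 = X + C (n:ℚ) := by
      rw [Polynomial.C_add, Polynomial.C_1]; ring
    rw [e4]
    have e5 : (108:ℚ)^(1+(i+1)) = 108 * 108^(1+i) := by ring
    rw [e5, mul_assoc, Polynomial.C_mul, Polynomial.C_mul]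
    ring
  rw [Finset.sum_congr rfl key]
  rw [← Finset.mul_sum]
  rw [ff_zero, pow_one]
  rw [show C ((108:ℚ) * bSeq n) = C (108:ℚ) * C (bSeq n) from Polynomial.C_mul,
      show C ((18:ℚ) * bSeq n) = C (18:ℚ) * C (bSeq n) from Polynomial.C_mul,
      show (C (18:ℚ)) = C (1/6:ℚ) * C (108:ℚ) by rw [← Polynomial.C_mul]; norm_num]
  ring

lemma Bf_zero : Bf 0 = 0 := by simp [Bf, Bpoly_zero]

lemma BfS_zero : BfShiftUp 0 = 0 := by simp [BfShiftUp, Bpoly_zero]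

lemma Bf_succ (n : ℕ) :
    Bf (n+1) = cst (18 * bSeq n) + 108 * (Xr + cst ((n:ℚ)+1)) * Bf n := by
  unfold Bf cst Xr
  rw [Bpoly_succ]
  simp only [map_add, map_mul, RatFunc.algebraMap_C, RatFunc.algebraMap_X, map_one, map_ofNat]

lemma BfS_succ (n : ℕ) :
    BfShiftUp (n+1) = cst (18 * bSeq n) + 108 * (Xr + cst ((n:ℚ)+2)) * BfShiftUp n := by
  unfold BfShiftUp cst Xr
  rw [Bpoly_succ]
  simp only [Polynomial.add_comp, Polynomial.mul_comp, Polynomial.C_comp, Polynomial.X_comp,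
    Polynomial.one_comp, Polynomial.ofNat_comp, Polynomial.natCast_comp, map_add, map_mul, RatFunc.algebraMap_C, RatFunc.algebraMap_X,
    map_one, map_ofNat, map_natCast]
  ring

lemma S1 (k : ℕ) : (-108*(k:ℚ)-90) * bSeq k + bSeq (k+1)
    = 2^(k+1) * (oddFac (3*k+2) : ℚ) / ((2*k+2).factorial : ℚ) := by
  unfold bSeq
  have e3 : 3*(k+1) = (3*k+2)+1 := by omega
  have e2 : 2*(k+1) = 2*k+2 := by omega
  rw [e3, e2]
  have o1 : oddFac (3*k+1) = oddFac (3*k) * (2*(3*k)+3) := oddFac_succ _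
  have o2 : oddFac (3*k+1+1) = oddFac (3*k+1) * (2*(3*k+1)+3) := oddFac_succ _
  have o3 : oddFac (3*k+2+1) = oddFac (3*k+2) * (2*(3*k+2)+3) := oddFac_succ _
  have o2' : oddFac (3*k+2) = oddFac (3*k) * (2*(3*k)+3) * (2*(3*k+1)+3) := by
    rw [show 3*k+2 = 3*k+1+1 from rfl, o2, o1]
  rw [o3, o2']
  have f1 : (2*k+2).factorial = (2*k+2) * ((2*k+1) * (2*k).factorial) := by
    rw [show 2*k+2 = (2*k+1)+1 from rfl, Nat.factorial_succ, Nat.factorial_succ]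
  rw [f1]
  have hfac : ((2*k).factorial : ℚ) ≠ 0 := Nat.cast_ne_zero.mpr (Nat.factorial_ne_zero _)
  have h1 : ((2*k:ℕ):ℚ)+2 ≠ 0 := by positivity
  have h2 : ((2*k:ℕ):ℚ)+1 ≠ 0 := by positivity
  push_cast
  field_simp
  ring

lemma S3 (k : ℕ) :
    ((k:ℚ)+2) * (2^(k+2) * (oddFac (3*k+5):ℚ) / ((2*k+4).factorial:ℚ))
    = (108*((k:ℚ)+1)*((k:ℚ)+2)+15) * (2^(k+1)*(oddFac (3*k+2):ℚ)/((2*k+2).factorial:ℚ)) := by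
  have o : oddFac (3*k+5) = oddFac (3*k+2) * (2*(3*k+2)+3) * (2*(3*k+3)+3) * (2*(3*k+4)+3) := by
    rw [show 3*k+5 = 3*k+4+1 from rfl, oddFac_succ, show 3*k+4 = 3*k+3+1 from rfl, oddFac_succ,
      show 3*k+3 = 3*k+2+1 from rfl, oddFac_succ]
  have f : (2*k+4).factorial = (2*k+4) * ((2*k+3) * (2*k+2).factorial) := by
    rw [show 2*k+4 = (2*k+3)+1 from rfl, Nat.factorial_succ, show 2*k+3 = (2*k+2)+1 from rfl,
      Nat.factorial_succ]
  rw [o, f]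
  have hfac : ((2*k+2).factorial : ℚ) ≠ 0 := Nat.cast_ne_zero.mpr (Nat.factorial_ne_zero _)
  have h1 : ((2*k:ℕ):ℚ)+4 ≠ 0 := by positivity
  have h2 : ((2*k:ℕ):ℚ)+3 ≠ 0 := by positivity
  push_cast
  field_simp
  ring

lemma bSeq_one : bSeq 1 = 105 := by
  norm_num [bSeq, oddFac, Finset.prod_range_succ, Nat.factorial]

lemma keyE (k : ℕ) :
    Xr * ((6*Xr+1) * Bf (k+1) + cst (bSeq (k+1)))
      + 3*(6*Xr+1)*(6*Xr+5) * ((6*Xr+7) * BfShiftUp k + cst (bSeq k))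
    = (Xr + cst ((k:ℚ)+1)) * cst ((2:ℚ)^(k+1) * (oddFac (3*k+2) : ℚ) / ((2*k+2).factorial : ℚ))
      + 216 * Xr * (Xr + cst ((k:ℚ)+1)) * ((6*Xr+1) * Bf k + cst (bSeq k)) := by
  induction k with
  | zero =>
    rw [Bf_succ 0, Bf_zero, BfS_zero, bSeq_one]
    norm_num [bSeq_zero, oddFac, Finset.prod_range_succ, Nat.factorial]
    simp only [cst, map_ofNat, map_one]
    ring
  | succ k IH =>
    rw [show 3*(k+1)+2 = 3*k+5 from by omega, show 2*(k+1)+2 = 2*k+4 from by omega]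
    rw [Bf_succ (k+1), Bf_succ k, BfS_succ k]
    rw [Bf_succ k] at IH
    have L1 := congrArg cst (S1 k)
    have L2 := congrArg cst (S1 (k+1))
    rw [show 3*(k+1)+2 = 3*k+5 from by omega, show 2*(k+1)+2 = 2*k+4 from by omega] at L2
    have L3 := congrArg cst (S3 k)
    simp only [cst, map_add, map_mul, map_div₀, map_pow, map_neg, map_sub, map_natCast,
      map_ofNat, map_one] at L1 L2 L3 IH ⊢
    push_cast at L1 L2 L3 IH ⊢
    linear_combination (108*(Xr + (k:RatFunc ℚ) + 2)) * IH + Xr * L2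
      + (-108*Xr^2 + (108-216*((k:RatFunc ℚ)+2))*Xr + 15) * L1 - L3

lemma poly_ne' (a : ℚ) (h : a ≠ 0) : (6*X + C a : Polynomial ℚ) ≠ 0 := by
  intro h0
  have := congrArg (Polynomial.eval 0) h0
  simp at this
  exact h this

/-- The identity in `ℚ(x)`, for `n ≥ 1`:
`B_n(x) + b_n/(6x+1) = −3·(B_{n−1}(x+1) + b_{n−1}/(6x+7))·(6x+5)(6x+7)/x
 + (2^n·(x+n)/(6x+1))·((6n−1)!!/((2n)!·x)) + 216·(x+n)·(B_{n−1}(x) + b_{n−1}/(6x+1))`. -/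
theorem stmt4 (n : ℕ) (hn : 1 ≤ n) :
    Bf n + cst (bSeq n) / (6*Xr+1)
      = -3 * (BfShiftUp (n-1) + cst (bSeq (n-1)) / (6*Xr+7)) * ((6*Xr+5)*(6*Xr+7)) / Xr
        + (2^n * (Xr + (n : RatFunc ℚ)) / (6*Xr+1)) *
            (cst ((oddFac (3*n-1) : ℚ)) / (cst ((2*n).factorial : ℚ) * Xr))
        + 216 * (Xr + (n : RatFunc ℚ)) * (Bf (n-1) + cst (bSeq (n-1)) / (6*Xr+1)) := by
  obtain ⟨k, rfl⟩ : ∃ k, n = k+1 := ⟨n-1, by omega⟩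
  simp only [Nat.add_sub_cancel]
  rw [show 3*(k+1)-1 = 3*k+2 from by omega, show 2*(k+1) = 2*k+2 from by omega]
  have key := keyE k
  have hX : Xr ≠ 0 := RatFunc.X_ne_zero
  have h1 : (6*Xr+1 : RatFunc ℚ) ≠ 0 := by
    have e : (6*Xr+1 : RatFunc ℚ) = algebraMap (Polynomial ℚ) (RatFunc ℚ) (6*X + C 1) := by
      simp only [Xr, map_add, map_mul, map_ofNat, RatFunc.algebraMap_X, RatFunc.algebraMap_C,
        map_one]
    rw [e]
    exact RatFunc.algebraMap_ne_zero (poly_ne' 1 one_ne_zero)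
  have h7 : (6*Xr+7 : RatFunc ℚ) ≠ 0 := by
    have e : (6*Xr+7 : RatFunc ℚ) = algebraMap (Polynomial ℚ) (RatFunc ℚ) (6*X + C 7) := by
      simp only [Xr, map_add, map_mul, map_ofNat, RatFunc.algebraMap_X, RatFunc.algebraMap_C]
    rw [e]
    exact RatFunc.algebraMap_ne_zero (poly_ne' 7 (by norm_num))
  have hfac : (cst (((2*k+2).factorial : ℕ) : ℚ)) ≠ 0 := by
    rw [cst, ← RatFunc.algebraMap_C]
    exact RatFunc.algebraMap_ne_zero (Polynomial.C_ne_zero.mpr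
      (Nat.cast_ne_zero.mpr (Nat.factorial_ne_zero _)))
  simp only [cst, map_div₀, map_mul, map_pow, map_natCast, map_ofNat, map_add, map_one] at key ⊢
  push_cast at key ⊢
  simp only [cst, map_natCast] at hfac
  field_simp
  field_simp at key
  linear_combination key
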